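/- Let S be a linear subspace of ℝ^d, let Z be a random vector in ℝ^d supported in S with finite second moment, and let Y be a random vector in ℝ^d with finite second moment. Write Y_S and Y_{S⊥} for the orthogonal projections of Y onto S and its orthogonal complement. Then for every λ > 0 the Sinkhorn divergence satisfies S_λ(P_Z, P_Y) = S_λ(P_Z, P_{Y_S}) + E[‖Y_{S⊥}‖²] + ( W²_{2,λ}(P_{Y_S}, P_{Y_S}) − W²_{2,λ}(P_Y, P_Y) )/2. -/

import Mathlib

open MeasureTheory ProbabilityTheory Matrix
open scoped ENNReal NNReal Classical

noncomputable section

abbrev Evec (d : ℕ) := EuclideanSpace ℝ (Fin d)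

/-- Couplings: joint measures with prescribed marginals. -/
def IsCoupling {E F : Type*} [MeasurableSpace E] [MeasurableSpace F]
    (π : Measure (E × F)) (P : Measure E) (Q : Measure F) : Prop :=
  π.fst = P ∧ π.snd = Q

/-- KL divergence valued in `ℝ≥0∞` (junk value `⊤` when not absolutely continuous
or not integrable). -/
def klDivNN {E : Type*} [MeasurableSpace E] (μ ν : Measure E) : ℝ≥0∞ :=
  if μ ≪ ν ∧ Integrable (fun x => Real.log (μ.rnDeriv ν x).toReal) μ
  then ENNReal.ofReal (∫ x, Real.log (μ.rnDeriv ν x).toReal ∂μ)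
  else ⊤

/-- Mutual information of a joint measure. -/
def mutInfo {E F : Type*} [MeasurableSpace E] [MeasurableSpace F]
    (π : Measure (E × F)) : ℝ≥0∞ :=
  if h : SFinite π.snd then klDivNN π (haveI := h; π.fst.prod π.snd) else ⊤

/-- Entropy-regularized squared 2-Wasserstein distance. -/
def entW2 {d : ℕ} (lam : ℝ) (P Q : Measure (Evec d)) : ℝ :=
  sInf {c : ℝ | ∃ π : Measure (Evec d × Evec d), IsCoupling π P Q ∧ mutInfo π ≠ ⊤ ∧
    Integrable (fun p => ‖p.1 - p.2‖ ^ 2) π ∧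
    c = ∫ p, ‖p.1 - p.2‖ ^ 2 ∂π + lam * (mutInfo π).toReal}

/-- Sinkhorn divergence. -/
def sinkhornDiv {d : ℕ} (lam : ℝ) (P Q : Measure (Evec d)) : ℝ :=
  entW2 lam P Q - (entW2 lam P P + entW2 lam Q Q) / 2

/-- Standard Gaussian on `ℝ^r`. -/
def stdGaussian (r : ℕ) : Measure (Evec r) :=
  Measure.map (⇑(EuclideanSpace.equiv (Fin r) ℝ).symm)
    (Measure.pi fun _ : Fin r => gaussianReal 0 1)

/-- The map `x ↦ G x` of a matrix acting on Euclidean space. -/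
def matVecMap {d r : ℕ} (G : Matrix (Fin d) (Fin r) ℝ) : Evec r → Evec d :=
  fun x => (EuclideanSpace.equiv (Fin d) ℝ).symm (G.mulVec (EuclideanSpace.equiv (Fin r) ℝ x))

/-- Centered Gaussian measure with covariance `K`. -/
def gaussianOfCov {d : ℕ} (K : Matrix (Fin d) (Fin d) ℝ) (hK : K.PosSemidef) :
    Measure (Evec d) :=
  Measure.map (matVecMap (hK.1.eigenvectorUnitary.1 * diagonal (fun i => Real.sqrt (hK.1.eigenvalues i)) *
    (star hK.1.eigenvectorUnitary : Matrix (Fin d) (Fin d) ℝ))) (stdGaussian d)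

/-- Covariance matrix of a measure on `ℝ^d`. -/
def covMatrix {d : ℕ} (μ : Measure (Evec d)) : Matrix (Fin d) (Fin d) ℝ :=
  Matrix.of fun i j => ∫ x, (x i - ∫ y, y i ∂μ) * (x j - ∫ y, y j ∂μ) ∂μ

/-- The sub-gaussian condition with parameter `s` for a measure on `ℝ^d`. -/
def IsSubG {d : ℕ} (μ : Measure (Evec d)) (s : ℝ) : Prop :=
  ∫ x, Real.exp (‖x‖ ^ 2 / (2 * d * s)) ∂μ ≤ 2

/-- The sub-gaussian parameter `σ²(X)` of a measure on `ℝ^d`. -/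
def subgParam {d : ℕ} (μ : Measure (Evec d)) : ℝ :=
  sInf {s : ℝ | 0 < s ∧ IsSubG μ s}

/-- Empirical measure of a sample. -/
def empMeasure {d : ℕ} (n : ℕ) (y : Fin n → Evec d) : Measure (Evec d) :=
  (n : ℝ≥0∞)⁻¹ • ∑ i : Fin n, Measure.dirac (y i)

/-- `u` is an orthonormal eigenbasis of `K` with eigenvalues `μ` in decreasing order. -/
def IsEigenDecomp {d : ℕ} (K : Matrix (Fin d) (Fin d) ℝ)
    (u : Fin d → Evec d) (μ : Fin d → ℝ) : Prop :=
  Orthonormal ℝ u ∧ Antitone μ ∧ ∀ i, matVecMap K (u i) = μ i • u i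


/-- Orthogonal projection onto a subspace, as a map of the ambient space. -/
def projSub {d : ℕ} (S : Submodule ℝ (Evec d)) : Evec d → Evec d :=
  fun y => (S.orthogonalProjectionOnto y : Evec d)

namespace SinkhornAux

open MeasureTheory ProbabilityTheory

variable {α β : Type*} [MeasurableSpace α] [MeasurableSpace β]

lemma measure_eq_inter_of_compl_null {μ : Measure α} {G B : Set α} (hG : μ Gᶜ = 0) :
    μ B = μ (B ∩ G) := by
  refine measure_congr ?_
  rw [MeasureTheory.ae_eq_set]
  have h1 : μ (B \ (B ∩ G)) = 0 :=
    measure_mono_null (by intro x hx; simp only [Set.mem_diff, Set.mem_inter_iff] at hx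
                          exact fun h => hx.2 ⟨hx.1, h⟩) hG
  have h2 : μ ((B ∩ G) \ B) = 0 := by
    refine measure_mono_null ?_ (measure_empty (μ := μ))
    intro x hx; exact absurd hx.1.1 hx.2
  exact ⟨h1, h2⟩

lemma klDivNN_self_ne_top (μ : Measure α) [SigmaFinite μ] : klDivNN μ μ ≠ ⊤ := by
  rw [klDivNN, if_pos]
  · exact ENNReal.ofReal_ne_top
  refine ⟨Measure.AbsolutelyContinuous.rfl, ?_⟩
  refine (integrable_zero _ _ _).congr ?_
  filter_upwards [Measure.rnDeriv_self μ] with x hx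
  simp [hx]

lemma mul_neg_log_le {t : ℝ} (h0 : 0 ≤ t) : t * (-Real.log t) ≤ Real.exp (-1) := by
  rcases eq_or_lt_of_le h0 with h | h0
  · simp [← h, (Real.exp_pos (-1)).le]
  rcases le_or_gt 1 t with h | h
  · have hl : 0 ≤ Real.log t := Real.log_nonneg h
    have : t * (-Real.log t) ≤ 0 := by nlinarith
    exact this.trans (Real.exp_pos _).le
  · have hu : 0 < -Real.log t := by
      have := Real.log_neg h0 h
      linarith
    have hlog : Real.log (-Real.log t) ≤ -Real.log t - 1 := Real.log_le_sub_one_of_pos hu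
    have ht : t = Real.exp (Real.log t) := (Real.exp_log h0).symm
    calc t * (-Real.log t) = Real.exp (Real.log t) * Real.exp (Real.log (-Real.log t)) := by
          rw [← ht, Real.exp_log hu]
      _ = Real.exp (Real.log t + Real.log (-Real.log t)) := (Real.exp_add _ _).symm
      _ ≤ Real.exp (-1) := by
          apply Real.exp_le_exp.mpr; linarith

end SinkhornAux
namespace SinkhornAux

open MeasureTheory ProbabilityTheory
open scoped ENNReal

variable {α β : Type*} [MeasurableSpace α] [MeasurableSpace β]

/-- Data processing inequality for `klDivNN`. -/
lemma klDivNN_map_le {T : α → β} (hT : Measurable T)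
    (μ ν : Measure α) [IsProbabilityMeasure μ] [IsProbabilityMeasure ν] :
    klDivNN (μ.map T) (ν.map T) ≤ klDivNN μ ν := by
  by_cases hcond : μ ≪ ν ∧ Integrable (fun x => Real.log (μ.rnDeriv ν x).toReal) μ
  swap
  · simp only [klDivNN]
    rw [if_neg hcond]
    exact le_top
  obtain ⟨hac, hint⟩ := hcond
  haveI : IsProbabilityMeasure (μ.map T) := Measure.isProbabilityMeasure_map hT.aemeasurable
  haveI : IsProbabilityMeasure (ν.map T) := Measure.isProbabilityMeasure_map hT.aemeasurable
  set f := μ.rnDeriv ν with hfdef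
  set g := (μ.map T).rnDeriv (ν.map T) with hgdef
  have hacT : μ.map T ≪ ν.map T := hac.map hT
  have hgm : Measurable g := Measure.measurable_rnDeriv _ _
  have hfm : Measurable f := Measure.measurable_rnDeriv _ _
  have hf_pos : ∀ᵐ x ∂μ, 0 < f x := Measure.rnDeriv_pos hac
  have hf_lt : ∀ᵐ x ∂μ, f x < ∞ := hac.ae_le (Measure.rnDeriv_lt_top μ ν)
  have hg_pos : ∀ᵐ x ∂μ, 0 < g (T x) :=
    (ae_map_iff hT.aemeasurable (measurableSet_lt measurable_const hgm)).mp
      (Measure.rnDeriv_pos hacT)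
  have hg_lt : ∀ᵐ x ∂μ, g (T x) < ∞ :=
    (ae_map_iff hT.aemeasurable (measurableSet_lt hgm measurable_const)).mp
      (hacT.ae_le (Measure.rnDeriv_lt_top _ _))
  -- the likelihood ratio h
  set hE : α → ℝ≥0∞ := fun x => g (T x) / f x with hhE
  have hhEm : Measurable hE := (hgm.comp hT).div hfm
  have h_lint : ∫⁻ x, hE x ∂μ ≤ 1 := by
    conv_lhs => rw [← Measure.withDensity_rnDeriv_eq μ ν hac]
    rw [lintegral_withDensity_eq_lintegral_mul _ hfm hhEm]
    calc ∫⁻ x, (f * hE) x ∂ν ≤ ∫⁻ x, g (T x) ∂ν := by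
          refine lintegral_mono fun x => ?_
          simpa [hhE, Pi.mul_apply] using
            (ENNReal.mul_div_le : f x * (g (T x) / f x) ≤ g (T x))
      _ = ∫⁻ y, g y ∂(ν.map T) := (lintegral_map hgm hT).symm
      _ = (μ.map T) Set.univ := Measure.lintegral_rnDeriv hacT
      _ = 1 := measure_univ
  have hE_lt : ∀ᵐ x ∂μ, hE x < ∞ :=
    ae_lt_top hhEm (lt_of_le_of_lt h_lint ENNReal.one_lt_top).ne
  set h : α → ℝ := fun x => (hE x).toReal with hh
  have h_int : Integrable h μ :=
    integrable_toReal_of_lintegral_ne_top hhEm.aemeasurable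
      (lt_of_le_of_lt h_lint ENNReal.one_lt_top).ne
  have h_int_le : ∫ x, h x ∂μ ≤ 1 := by
    rw [hh]
    rw [integral_toReal hhEm.aemeasurable hE_lt]
    calc (∫⁻ x, hE x ∂μ).toReal ≤ (1 : ℝ≥0∞).toReal :=
          ENNReal.toReal_mono ENNReal.one_ne_top h_lint
      _ = 1 := by simp
  -- log decomposition
  have h_log : ∀ᵐ x ∂μ, Real.log (g (T x)).toReal
      = Real.log (f x).toReal + Real.log (h x) ∧ 0 < h x := by
    filter_upwards [hf_pos, hf_lt, hg_pos, hg_lt] with x h1 h2 h3 h4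
    have hf0 : (f x).toReal ≠ 0 := (ENNReal.toReal_pos h1.ne' h2.ne).ne'
    have hg0 : (g (T x)).toReal ≠ 0 := (ENNReal.toReal_pos h3.ne' h4.ne).ne'
    have hhx : h x = (g (T x)).toReal / (f x).toReal := by
      rw [hh, hhE]; simp [ENNReal.toReal_div]
    constructor
    · rw [hhx, Real.log_div hg0 hf0]; ring
    · rw [hhx]
      exact div_pos (lt_of_le_of_ne ENNReal.toReal_nonneg (Ne.symm hg0))
        (lt_of_le_of_ne ENNReal.toReal_nonneg (Ne.symm hf0))
  -- integrability of log g on μ.map T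
  have hLgm : Measurable fun y => Real.log (g y).toReal :=
    (hgm.ennreal_toReal).log
  have hLg_int : Integrable (fun y => Real.log (g y).toReal) (μ.map T) := by
    refine ⟨hLgm.aestronglyMeasurable, ?_⟩
    rw [hasFiniteIntegral_iff_norm]
    have habs : ∀ y : β, ENNReal.ofReal ‖Real.log (g y).toReal‖
        ≤ ENNReal.ofReal (max 0 (Real.log (g y).toReal))
          + ENNReal.ofReal (max 0 (-Real.log (g y).toReal)) := by
      intro y
      rw [← ENNReal.ofReal_add (le_max_left _ _) (le_max_left _ _)]
      refine ENNReal.ofReal_le_ofReal ?_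
      rcases le_or_gt 0 (Real.log (g y).toReal) with hc | hc
      · rw [Real.norm_eq_abs, abs_of_nonneg hc, max_eq_right hc,
          max_eq_left (neg_nonpos.mpr hc)]
        linarith
      · rw [Real.norm_eq_abs, abs_of_neg hc, max_eq_left hc.le,
          max_eq_right (neg_nonneg.mpr hc.le)]
        linarith
    calc ∫⁻ y, ENNReal.ofReal ‖Real.log (g y).toReal‖ ∂(μ.map T)
        ≤ ∫⁻ y, (ENNReal.ofReal (max 0 (Real.log (g y).toReal))
            + ENNReal.ofReal (max 0 (-Real.log (g y).toReal))) ∂(μ.map T) :=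
          lintegral_mono habs
      _ = (∫⁻ y, ENNReal.ofReal (max 0 (Real.log (g y).toReal)) ∂(μ.map T))
            + ∫⁻ y, ENNReal.ofReal (max 0 (-Real.log (g y).toReal)) ∂(μ.map T) :=
          lintegral_add_left ((measurable_const.max hLgm).ennreal_ofReal) _
      _ < ∞ := by
          refine ENNReal.add_lt_top.mpr ⟨?_, ?_⟩
          · -- positive part
            rw [lintegral_map ((measurable_const.max hLgm).ennreal_ofReal) hT]
            have hbd : ∀ᵐ x ∂μ, ENNReal.ofReal (max 0 (Real.log (g (T x)).toReal))
                ≤ ENNReal.ofReal (|Real.log (f x).toReal| + h x) := by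
              filter_upwards [h_log] with x ⟨hx1, hx2⟩
              refine ENNReal.ofReal_le_ofReal ?_
              have hlh : Real.log (h x) ≤ h x - 1 := Real.log_le_sub_one_of_pos hx2
              rw [max_le_iff]
              constructor
              · positivity
              · rw [hx1]
                have h1 := le_abs_self (Real.log (f x).toReal)
                linarith
            calc ∫⁻ x, ENNReal.ofReal (max 0 (Real.log (g (T x)).toReal)) ∂μ
                ≤ ∫⁻ x, ENNReal.ofReal (|Real.log (f x).toReal| + h x) ∂μ :=
                  lintegral_mono_ae hbd
              _ < ∞ := by
                  have hInt : Integrable (fun x => |Real.log (f x).toReal| + h x) μ :=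
                    hint.abs.add h_int
                  have h2 := hInt.2
                  rw [hasFiniteIntegral_iff_norm] at h2
                  refine lt_of_le_of_lt (lintegral_mono fun x => ?_) h2
                  refine ENNReal.ofReal_le_ofReal ?_
                  rw [Real.norm_eq_abs]
                  exact le_abs_self _
          · -- negative part: 1/e bound
            conv_lhs => rw [← Measure.withDensity_rnDeriv_eq (μ.map T) (ν.map T) hacT]
            rw [lintegral_withDensity_eq_lintegral_mul _ hgm
              (show Measurable fun y => ENNReal.ofReal (max 0 (-Real.log (g y).toReal)) from
                (measurable_const.max hLgm.neg).ennreal_ofReal)]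
            have hptw : ∀ᵐ y ∂(ν.map T),
                (g * fun y => ENNReal.ofReal (max 0 (-Real.log (g y).toReal))) y
                  ≤ ENNReal.ofReal (Real.exp (-1)) := by
              filter_upwards [Measure.rnDeriv_lt_top (μ.map T) (ν.map T)] with y hy
              simp only [Pi.mul_apply]
              rcases eq_or_ne (g y) 0 with h0 | h0
              · simp [h0]
              · have hgy : g y * ENNReal.ofReal (max 0 (-Real.log (g y).toReal))
                    = ENNReal.ofReal ((g y).toReal * max 0 (-Real.log (g y).toReal)) := by
                  rw [ENNReal.ofReal_mul ENNReal.toReal_nonneg, ENNReal.ofReal_toReal hy.ne]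
                rw [hgy]
                refine ENNReal.ofReal_le_ofReal ?_
                rcases le_or_gt 0 (Real.log (g y).toReal) with hc | hc
                · rw [max_eq_left (neg_nonpos.mpr hc), mul_zero]
                  exact (Real.exp_pos _).le
                · rw [max_eq_right (neg_nonneg.mpr hc.le)]
                  exact mul_neg_log_le ENNReal.toReal_nonneg
            calc ∫⁻ y, (g * fun y => ENNReal.ofReal (max 0 (-Real.log (g y).toReal))) y
                  ∂(ν.map T)
                ≤ ∫⁻ _, ENNReal.ofReal (Real.exp (-1)) ∂(ν.map T) := lintegral_mono_ae hptw
              _ < ∞ := by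
                  rw [lintegral_const]
                  exact ENNReal.mul_lt_top ENNReal.ofReal_lt_top (measure_lt_top _ _)
  -- value inequality
  have hLgT_int : Integrable (fun x => Real.log (g (T x)).toReal) μ :=
    (integrable_map_measure hLgm.aestronglyMeasurable hT.aemeasurable).mp hLg_int
  have hq_int : Integrable
      (fun x => Real.log (g (T x)).toReal - Real.log (f x).toReal) μ := hLgT_int.sub hint
  have h_val : ∫ y, Real.log (g y).toReal ∂(μ.map T)
      ≤ ∫ x, Real.log (f x).toReal ∂μ := by
    rw [integral_map hT.aemeasurable hLgm.aestronglyMeasurable]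
    have hsplit : ∫ x, Real.log (g (T x)).toReal ∂μ
        = ∫ x, Real.log (f x).toReal ∂μ
          + ∫ x, (Real.log (g (T x)).toReal - Real.log (f x).toReal) ∂μ := by
      rw [← integral_add hint hq_int]; congr 1; funext x; ring
    have hq_le : ∫ x, (Real.log (g (T x)).toReal - Real.log (f x).toReal) ∂μ
        ≤ ∫ x, (h x - 1) ∂μ := by
      refine integral_mono_ae hq_int (h_int.sub (integrable_const 1)) ?_
      filter_upwards [h_log] with x ⟨hx1, hx2⟩
      rw [hx1]
      have := Real.log_le_sub_one_of_pos hx2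
      linarith
    have : ∫ x, (h x - 1) ∂μ ≤ 0 := by
      rw [integral_sub h_int (integrable_const 1), integral_const]
      simp only [measure_univ, ENNReal.toReal_one, smul_eq_mul, one_mul, probReal_univ]
      linarith
    linarith
  rw [klDivNN, if_pos ⟨hacT, hLg_int⟩, klDivNN, if_pos ⟨hac, hint⟩]
  exact ENNReal.ofReal_le_ofReal h_val

end SinkhornAux
namespace SinkhornAux

open MeasureTheory ProbabilityTheory
open scoped ENNReal RealInnerProductSpace

variable {d : ℕ}

lemma continuous_projSub (S : Submodule ℝ (Evec d)) : Continuous (projSub S) :=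
  continuous_subtype_val.comp (S.orthogonalProjectionOnto).continuous

lemma measurable_projSub (S : Submodule ℝ (Evec d)) : Measurable (projSub S) :=
  (continuous_projSub S).measurable

lemma projSub_mem (S : Submodule ℝ (Evec d)) (y : Evec d) : projSub S y ∈ S :=
  (S.orthogonalProjectionOnto y).2

lemma cost_pythagoras {S : Submodule ℝ (Evec d)} {z : Evec d} (y : Evec d) (hz : z ∈ S) :
    ‖z - y‖ ^ 2 = ‖z - projSub S y‖ ^ 2 + ‖y - projSub S y‖ ^ 2 := by
  have h1 : z - projSub S y ∈ S := S.sub_mem hz (projSub_mem S y)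
  have h2 : y - projSub S y ∈ Sᗮ := S.sub_starProjection_mem_orthogonal y
  have hinner : ⟪z - projSub S y, y - projSub S y⟫ = 0 :=
    (Submodule.mem_orthogonal S (y - projSub S y)).mp h2 _ h1
  have hzy : z - y = (z - projSub S y) - (y - projSub S y) := by abel
  rw [hzy, norm_sub_sq_real, hinner]
  ring

lemma norm_sq_decomp (S : Submodule ℝ (Evec d)) (y : Evec d) :
    ‖y‖ ^ 2 = ‖projSub S y‖ ^ 2 + ‖y - projSub S y‖ ^ 2 := by
  have := cost_pythagoras (S := S) y S.zero_mem
  simpa [norm_sub_rev] using this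

lemma sq_norm_projSub_le (S : Submodule ℝ (Evec d)) (y : Evec d) :
    ‖projSub S y‖ ^ 2 ≤ ‖y‖ ^ 2 := by
  have h := norm_sq_decomp S y
  nlinarith [sq_nonneg ‖y - projSub S y‖]

lemma sq_norm_sub_projSub_le (S : Submodule ℝ (Evec d)) (y : Evec d) :
    ‖y - projSub S y‖ ^ 2 ≤ ‖y‖ ^ 2 := by
  have h := norm_sq_decomp S y
  nlinarith [sq_nonneg ‖projSub S y‖]

/-- A coupling of probability measures is a probability measure. -/
lemma isProb_of_coupling {E F : Type*} [MeasurableSpace E] [MeasurableSpace F]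
    {P : Measure E} {Q : Measure F} [IsProbabilityMeasure P]
    {π : Measure (E × F)} (h : IsCoupling π P Q) : IsProbabilityMeasure π := by
  constructor
  have : π.fst Set.univ = 1 := by rw [h.1]; exact measure_univ
  rwa [Measure.fst_apply MeasurableSet.univ, Set.preimage_univ] at this

lemma integrable_comp_fst {E F : Type*} [MeasurableSpace E] [MeasurableSpace F]
    {π : Measure (E × F)} {f : E → ℝ} (hf : Measurable f) (h : Integrable f π.fst) :
    Integrable (fun p : E × F => f p.1) π :=
  (integrable_map_measure hf.aestronglyMeasurable measurable_fst.aemeasurable).mp h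

lemma integrable_comp_snd {E F : Type*} [MeasurableSpace E] [MeasurableSpace F]
    {π : Measure (E × F)} {f : F → ℝ} (hf : Measurable f) (h : Integrable f π.snd) :
    Integrable (fun p : E × F => f p.2) π :=
  (integrable_map_measure hf.aestronglyMeasurable measurable_snd.aemeasurable).mp h

lemma measurable_cost : Measurable fun p : Evec d × Evec d => ‖p.1 - p.2‖ ^ 2 :=
  (((continuous_fst.sub continuous_snd).norm).pow 2).measurable

lemma integrable_cost_of_marginals (π : Measure (Evec d × Evec d))
    (h1 : Integrable (fun z => ‖z‖ ^ 2) π.fst) (h2 : Integrable (fun y => ‖y‖ ^ 2) π.snd) :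
    Integrable (fun p : Evec d × Evec d => ‖p.1 - p.2‖ ^ 2) π := by
  have hb : Integrable (fun p : Evec d × Evec d => 2 * ‖p.1‖ ^ 2 + 2 * ‖p.2‖ ^ 2) π := by
    refine Integrable.add ?_ ?_
    · exact (integrable_comp_fst (by exact (continuous_norm.pow 2).measurable) h1).const_mul 2
    · exact (integrable_comp_snd (by exact (continuous_norm.pow 2).measurable) h2).const_mul 2
  refine hb.mono' measurable_cost.aestronglyMeasurable ?_
  refine Filter.Eventually.of_forall fun p => ?_
  rw [Real.norm_eq_abs, abs_of_nonneg (by positivity)]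
  have h := norm_sub_le p.1 p.2
  nlinarith [mul_self_le_mul_self (norm_nonneg (p.1 - p.2)) h,
    sq_nonneg (‖p.1‖ - ‖p.2‖), norm_nonneg p.1, norm_nonneg p.2]

lemma mutInfo_prod_ne_top {E F : Type*} [MeasurableSpace E] [MeasurableSpace F]
    (P : Measure E) (Q : Measure F) [IsProbabilityMeasure P] [IsProbabilityMeasure Q] :
    mutInfo (P.prod Q) ≠ ⊤ := by
  have hs : SFinite (P.prod Q).snd := by rw [Measure.snd_prod]; infer_instance
  rw [mutInfo, dif_pos hs, Measure.fst_prod, Measure.snd_prod]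
  exact klDivNN_self_ne_top _

/-- marginals of map by `Prod.map id (projSub S)`. -/
lemma coupling_map_proj {S : Submodule ℝ (Evec d)} {PZ PY : Measure (Evec d)}
    {π : Measure (Evec d × Evec d)} (h : IsCoupling π PZ PY) :
    IsCoupling (π.map (Prod.map id (projSub S))) PZ (PY.map (projSub S)) := by
  have hTm : Measurable (Prod.map (id : Evec d → Evec d) (projSub S)) :=
    measurable_id.prodMap (measurable_projSub S)
  constructor
  · rw [← h.1]
    show (π.map _).map Prod.fst = π.map Prod.fst
    rw [Measure.map_map measurable_fst hTm]
    rfl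
  · rw [← h.2]
    show (π.map _).map Prod.snd = (π.map Prod.snd).map (projSub S)
    rw [Measure.map_map measurable_snd hTm,
      Measure.map_map (measurable_projSub S) measurable_snd]
    rfl

lemma mutInfo_map_le (S : Submodule ℝ (Evec d)) {PZ PY : Measure (Evec d)}
    [IsProbabilityMeasure PZ] [IsProbabilityMeasure PY]
    (π : Measure (Evec d × Evec d)) (hc : IsCoupling π PZ PY) :
    mutInfo (π.map (Prod.map id (projSub S))) ≤ mutInfo π := by
  haveI : IsProbabilityMeasure π := isProb_of_coupling hc
  set T := Prod.map (id : Evec d → Evec d) (projSub S) with hT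
  have hTm : Measurable T := measurable_id.prodMap (measurable_projSub S)
  haveI : IsProbabilityMeasure (π.map T) := Measure.isProbabilityMeasure_map hTm.aemeasurable
  have hc' : IsCoupling (π.map T) PZ (PY.map (projSub S)) := coupling_map_proj hc
  haveI : IsProbabilityMeasure (PY.map (projSub S)) :=
    Measure.isProbabilityMeasure_map (measurable_projSub S).aemeasurable
  have hs1 : SFinite (π.map T).snd := by rw [hc'.2]; infer_instance
  have hs2 : SFinite π.snd := by rw [hc.2]; infer_instance
  rw [mutInfo, dif_pos hs1, mutInfo, dif_pos hs2]
  have key : (π.map T).fst.prod ((π.map T).snd) = (π.fst.prod π.snd).map T := by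
    rw [hc'.1, hc'.2, hc.1, hc.2]
    have := Measure.map_prod_map (f := (id : Evec d → Evec d)) (g := projSub S)
      PZ PY measurable_id (measurable_projSub S)
    rw [Measure.map_id] at this
    exact this
  rw [key]
  haveI : IsProbabilityMeasure (π.fst.prod π.snd) := by
    rw [hc.1, hc.2]; infer_instance
  exact klDivNN_map_le hTm π (π.fst.prod π.snd)

end SinkhornAux
namespace SinkhornAux

open MeasureTheory ProbabilityTheory
open scoped ENNReal

variable {d : ℕ} (S : Submodule ℝ (Evec d)) (PY : Measure (Evec d)) [IsProbabilityMeasure PY]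

lemma measurable_graph : Measurable fun y : Evec d => (projSub S y, y) :=
  (measurable_projSub S).prodMk measurable_id

/-- Joint law of `(projSub S Y, Y)`. -/
def liftRho : Measure (Evec d × Evec d) :=
  PY.map (fun y => (projSub S y, y))

instance : IsProbabilityMeasure (liftRho S PY) :=
  Measure.isProbabilityMeasure_map (measurable_graph S).aemeasurable

/-- The conditional law of `Y` given `projSub S Y`, as a kernel on pairs using the second
coordinate. -/
def liftKer : Kernel (Evec d × Evec d) (Evec d) :=
  Kernel.comap (liftRho S PY).condKernel Prod.snd measurable_snd

instance : IsMarkovKernel (liftKer S PY) :=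
  Kernel.IsMarkovKernel.comap _ measurable_snd

/-- Lift a coupling with `projSub S Y` to a coupling with `Y`. -/
def liftM (m : Measure (Evec d × Evec d)) : Measure (Evec d × Evec d) :=
  (m ⊗ₘ liftKer S PY).map (fun q => (q.1.1, q.2))

lemma measurable_liftproj :
    Measurable fun q : (Evec d × Evec d) × Evec d => (q.1.1, q.2) :=
  (measurable_fst.fst).prodMk measurable_snd

lemma liftRho_fst : (liftRho S PY).fst = PY.map (projSub S) := by
  show (PY.map _).map Prod.fst = _
  rw [Measure.map_map measurable_fst (measurable_graph S)]
  rfl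

lemma liftRho_snd : (liftRho S PY).snd = PY := by
  show (PY.map _).map Prod.snd = _
  rw [Measure.map_map measurable_snd (measurable_graph S)]
  exact Measure.map_id'

/-- The graph set. -/
def goodSet : Set (Evec d × Evec d) := {p | projSub S p.2 = p.1}

lemma measurable_goodSet : MeasurableSet (goodSet S) := by
  have h : goodSet S = (fun p : Evec d × Evec d => projSub S p.2 - p.1) ⁻¹' {0} := by
    ext p; simp [goodSet, sub_eq_zero]
  rw [h]
  exact ((((continuous_projSub S).comp continuous_snd).sub continuous_fst).measurable)
    (measurableSet_singleton 0)

lemma liftKer_ae : ∀ᵐ s ∂(PY.map (projSub S)),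
    (liftRho S PY).condKernel s {y | projSub S y = s}ᶜ = 0 := by
  have hD : MeasurableSet (goodSet S) := measurable_goodSet S
  have hρ : liftRho S PY (goodSet S)ᶜ = 0 := by
    rw [liftRho, Measure.map_apply (measurable_graph S) hD.compl]
    convert measure_empty
    · ext y; simp [goodSet]
    · infer_instance
  have h0 : ((liftRho S PY).fst ⊗ₘ (liftRho S PY).condKernel) (goodSet S)ᶜ = 0 := by
    rw [Measure.disintegrate (liftRho S PY) (liftRho S PY).condKernel]; exact hρ
  rw [Measure.compProd_apply hD.compl] at h0
  rw [← liftRho_fst S PY]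
  have h1 := (lintegral_eq_zero_iff
    (Kernel.measurable_kernel_prodMk_left hD.compl)).mp h0
  filter_upwards [h1] with s hs
  simp only [Pi.zero_apply] at hs
  have hset : (Prod.mk s ⁻¹' (goodSet S)ᶜ) = {y | projSub S y = s}ᶜ := by
    ext y; simp [goodSet]
  rwa [hset] at hs

lemma liftM_apply (m : Measure (Evec d × Evec d)) [SFinite m]
    {C : Set (Evec d × Evec d)} (hC : MeasurableSet C) :
    liftM S PY m C = ∫⁻ p, liftKer S PY p {y | (p.1, y) ∈ C} ∂m := by
  rw [liftM, Measure.map_apply (measurable_liftproj) hC,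
    Measure.compProd_apply (hC.preimage (measurable_liftproj))]
  rfl

lemma measurable_liftKer_slice {C : Set (Evec d × Evec d)} (hC : MeasurableSet C) :
    Measurable fun p : Evec d × Evec d => liftKer S PY p {y | (p.1, y) ∈ C} :=
  Kernel.measurable_kernel_prodMk_left (κ := liftKer S PY)
    (hC.preimage (measurable_liftproj (d := d)))

lemma liftM_lintegral (m : Measure (Evec d × Evec d)) [SFinite m]
    {G : Evec d × Evec d → ℝ≥0∞} (hG : Measurable G) :
    ∫⁻ q, G q ∂(liftM S PY m)
      = ∫⁻ p, ∫⁻ y, G (p.1, y) ∂(liftKer S PY p) ∂m := by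
  have hGm : Measurable fun q : (Evec d × Evec d) × Evec d => G (q.1.1, q.2) :=
    hG.comp measurable_liftproj
  rw [liftM, lintegral_map hG measurable_liftproj, Measure.lintegral_compProd hGm]

lemma lift_ae_concentrate (m : Measure (Evec d × Evec d))
    (hm2 : m.snd = PY.map (projSub S)) :
    ∀ᵐ p ∂m, liftKer S PY p {y | projSub S y = p.2}ᶜ = 0 := by
  have hset : ∀ s : Evec d, Prod.mk s ⁻¹' (goodSet S)ᶜ = {y | projSub S y = s}ᶜ := by
    intro s; ext y; simp [goodSet]
  have hGm : Measurable fun s =>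
      (liftRho S PY).condKernel s (Prod.mk s ⁻¹' (goodSet S)ᶜ) :=
    Kernel.measurable_kernel_prodMk_left (measurable_goodSet S).compl
  have h : ∀ᵐ s ∂(m.snd),
      (liftRho S PY).condKernel s (Prod.mk s ⁻¹' (goodSet S)ᶜ) = 0 := by
    rw [hm2]
    filter_upwards [liftKer_ae S PY] with s hs
    rw [hset s]; exact hs
  have h2 : ∀ᵐ p ∂m,
      (liftRho S PY).condKernel p.2 (Prod.mk p.2 ⁻¹' (goodSet S)ᶜ) = 0 :=
    (ae_map_iff measurable_snd.aemeasurable (hGm (measurableSet_singleton 0))).mp h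
  filter_upwards [h2] with p hp
  rw [hset p.2] at hp
  simpa [liftKer, Kernel.comap_apply] using hp

lemma measurable_projT' : Measurable fun p : Evec d × Evec d => (p.1, projSub S p.2) :=
  measurable_fst.prodMk ((measurable_projSub S).comp measurable_snd)

lemma map_projT'_liftM (m : Measure (Evec d × Evec d)) [SFinite m]
    (hm2 : m.snd = PY.map (projSub S)) :
    (liftM S PY m).map (fun p : Evec d × Evec d => (p.1, projSub S p.2)) = m := by
  ext C hC
  rw [Measure.map_apply (measurable_projT' S) hC,
    liftM_apply S PY m ((measurable_projT' S) hC)]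
  have hsetid : ∀ p : Evec d × Evec d,
      {y | (p.1, y) ∈ (fun p : Evec d × Evec d => (p.1, projSub S p.2)) ⁻¹' C}
        = {y | (p.1, projSub S y) ∈ C} := fun p => rfl
  simp only [hsetid]
  have hae : ∀ᵐ p ∂m, liftKer S PY p {y | (p.1, projSub S y) ∈ C}
      = Set.indicator C (1 : Evec d × Evec d → ℝ≥0∞) p := by
    filter_upwards [lift_ae_concentrate S PY m hm2] with p hp
    have hG : MeasurableSet {y : Evec d | projSub S y = p.2} :=
      (measurable_projSub S) (measurableSet_singleton p.2)
    have hrw : liftKer S PY p {y | (p.1, projSub S y) ∈ C}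
        = liftKer S PY p ({y | (p.1, projSub S y) ∈ C} ∩ {y | projSub S y = p.2}) :=
      measure_eq_inter_of_compl_null hp
    haveI : IsProbabilityMeasure (liftKer S PY p) :=
      IsMarkovKernel.is_probability_measure' p
    by_cases hpc : p ∈ C
    · have hset2 : {y : Evec d | (p.1, projSub S y) ∈ C} ∩ {y | projSub S y = p.2}
          = {y | projSub S y = p.2} := by
        ext y
        simp only [Set.mem_inter_iff, Set.mem_setOf_eq]
        refine ⟨fun h => h.2, fun h => ⟨?_, h⟩⟩
        rw [h]; simpa using hpc
      rw [hrw, hset2, Set.indicator_of_mem hpc]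
      simpa using (prob_compl_eq_zero_iff hG).mp hp
    · have hset2 : {y : Evec d | (p.1, projSub S y) ∈ C} ∩ {y | projSub S y = p.2}
          = ∅ := by
        ext y
        simp only [Set.mem_inter_iff, Set.mem_setOf_eq, Set.mem_empty_iff_false,
          iff_false, not_and]
        intro h1 h2
        rw [h2] at h1
        exact hpc (by simpa using h1)
      rw [hrw, hset2, Set.indicator_of_notMem hpc, measure_empty]
  rw [lintegral_congr_ae hae, lintegral_indicator_one hC]

lemma liftM_fst (m : Measure (Evec d × Evec d)) [SFinite m]
    (hm2 : m.snd = PY.map (projSub S)) :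
    (liftM S PY m).fst = m.fst := by
  conv_rhs => rw [← map_projT'_liftM S PY m hm2]
  show (liftM S PY m).map Prod.fst
      = ((liftM S PY m).map (fun p : Evec d × Evec d => (p.1, projSub S p.2))).map Prod.fst
  rw [Measure.map_map measurable_fst (measurable_projT' S)]
  rfl

lemma lintegral_liftKer_snd {B : Set (Evec d)} (hB : MeasurableSet B) :
    ∫⁻ s, (liftRho S PY).condKernel s B ∂(PY.map (projSub S)) = PY B := by
  rw [← liftRho_fst S PY]
  have h2 : ∫⁻ s, (liftRho S PY).condKernel s B ∂((liftRho S PY).fst)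
      = ((liftRho S PY).fst ⊗ₘ (liftRho S PY).condKernel) (Set.univ ×ˢ B) := by
    rw [Measure.compProd_apply (MeasurableSet.univ.prod hB)]
    refine (lintegral_congr fun s => ?_).symm
    congr 1
    ext y; simp
  rw [h2, Measure.disintegrate (liftRho S PY) (liftRho S PY).condKernel]
  rw [liftRho, Measure.map_apply (measurable_graph S) (MeasurableSet.univ.prod hB)]
  congr 1
  ext y; simp

lemma liftM_snd (m : Measure (Evec d × Evec d)) [SFinite m]
    (hm2 : m.snd = PY.map (projSub S)) :
    (liftM S PY m).snd = PY := by
  ext B hB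
  rw [Measure.snd_apply hB, liftM_apply S PY m (measurable_snd hB)]
  calc ∫⁻ p, liftKer S PY p {y | (p.1, y) ∈ Prod.snd ⁻¹' B} ∂m
      = ∫⁻ p, (liftRho S PY).condKernel p.2 B ∂m := rfl
    _ = ∫⁻ s, (liftRho S PY).condKernel s B ∂(m.map Prod.snd) :=
        (lintegral_map (Kernel.measurable_coe _ hB) measurable_snd).symm
    _ = PY B := by
        rw [show m.map Prod.snd = PY.map (projSub S) from hm2,
          lintegral_liftKer_snd S PY hB]

lemma liftM_prod (PZ : Measure (Evec d)) [IsProbabilityMeasure PZ] :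
    liftM S PY (PZ.prod (PY.map (projSub S))) = PZ.prod PY := by
  haveI : IsProbabilityMeasure (PY.map (projSub S)) :=
    Measure.isProbabilityMeasure_map (measurable_projSub S).aemeasurable
  refine (Measure.prod_eq fun A B hA hB => ?_).symm
  rw [liftM_apply S PY _ (hA.prod hB)]
  have hptw : ∀ p : Evec d × Evec d,
      liftKer S PY p {y | (p.1, y) ∈ A ×ˢ B}
        = Set.indicator A (1 : Evec d → ℝ≥0∞) p.1 * (liftRho S PY).condKernel p.2 B := by
    intro p
    by_cases hpA : p.1 ∈ A
    · rw [Set.indicator_of_mem hpA]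
      simp only [Pi.one_apply, one_mul]
      congr 1
      ext y; simp [hpA]
    · rw [Set.indicator_of_notMem hpA, zero_mul]
      convert measure_empty
      · ext y; simp [hpA]
      · infer_instance
  rw [lintegral_congr hptw,
    lintegral_prod_mul ((measurable_one.indicator hA).aemeasurable)
      ((Kernel.measurable_coe _ hB).aemeasurable)]
  rw [lintegral_indicator_one hA, lintegral_liftKer_snd S PY hB]

lemma liftM_withDensity (m : Measure (Evec d × Evec d)) [SFinite m]
    (hm2 : m.snd = PY.map (projSub S)) {f : Evec d × Evec d → ℝ≥0∞}
    (hf : Measurable f) :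
    liftM S PY (m.withDensity f)
      = (liftM S PY m).withDensity (fun p => f (p.1, projSub S p.2)) := by
  ext C hC
  have hLHS : liftM S PY (m.withDensity f) C
      = ∫⁻ p, f p * liftKer S PY p {y | (p.1, y) ∈ C} ∂m := by
    rw [liftM_apply S PY _ hC,
      lintegral_withDensity_eq_lintegral_mul _ hf (measurable_liftKer_slice S PY hC)]
    rfl
  have hfT : Measurable fun p : Evec d × Evec d => f (p.1, projSub S p.2) :=
    hf.comp (measurable_projT' S)
  rw [hLHS, withDensity_apply _ hC]
  rw [← lintegral_indicator hC (fun p : Evec d × Evec d => f (p.1, projSub S p.2))]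
  rw [liftM_lintegral S PY m (hfT.indicator hC)]
  refine (lintegral_congr_ae ?_).symm
  filter_upwards [lift_ae_concentrate S PY m hm2] with p hp
  have hae2 : ∀ᵐ y ∂(liftKer S PY p), projSub S y = p.2 := by
    rw [ae_iff]
    exact hp
  calc ∫⁻ y, Set.indicator C (fun q => f (q.1, projSub S q.2)) (p.1, y)
        ∂(liftKer S PY p)
      = ∫⁻ y, f p * Set.indicator {y : Evec d | (p.1, y) ∈ C} (1 : Evec d → ℝ≥0∞) y
        ∂(liftKer S PY p) := by
        refine lintegral_congr_ae ?_
        filter_upwards [hae2] with y hy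
        by_cases hyC : (p.1, y) ∈ C
        · rw [Set.indicator_of_mem hyC, Set.indicator_of_mem (by exact hyC), hy]
          simp
        · rw [Set.indicator_of_notMem hyC, Set.indicator_of_notMem (by exact hyC), mul_zero]
    _ = f p * liftKer S PY p {y | (p.1, y) ∈ C} := by
        have hsm : MeasurableSet {y : Evec d | (p.1, y) ∈ C} := measurable_prodMk_left hC
        rw [lintegral_const_mul _ (measurable_one.indicator hsm),
          lintegral_indicator_one hsm]

end SinkhornAux
namespace SinkhornAux

open MeasureTheory ProbabilityTheory
open scoped ENNReal

variable {d : ℕ} (S : Submodule ℝ (Evec d))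

lemma mutInfo_liftM {PZ PY : Measure (Evec d)}
    [IsProbabilityMeasure PZ] [IsProbabilityMeasure PY]
    (π' : Measure (Evec d × Evec d)) (hc : IsCoupling π' PZ (PY.map (projSub S)))
    (hmi : mutInfo π' ≠ ⊤) :
    mutInfo (liftM S PY π') = mutInfo π' ∧ IsCoupling (liftM S PY π') PZ PY := by
  haveI : IsProbabilityMeasure (PY.map (projSub S)) :=
    Measure.isProbabilityMeasure_map (measurable_projSub S).aemeasurable
  haveI : IsProbabilityMeasure π' := isProb_of_coupling hc
  have hcoupL : IsCoupling (liftM S PY π') PZ PY :=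
    ⟨by rw [liftM_fst S PY π' hc.2, hc.1], liftM_snd S PY π' hc.2⟩
  haveI : IsProbabilityMeasure (liftM S PY π') := isProb_of_coupling hcoupL
  refine ⟨?_, hcoupL⟩
  have hs1 : SFinite (liftM S PY π').snd := by rw [hcoupL.2]; infer_instance
  have hs2 : SFinite π'.snd := by rw [hc.2]; infer_instance
  rw [mutInfo, dif_pos hs1, mutInfo, dif_pos hs2]
  have hm0 : π'.fst.prod π'.snd = PZ.prod (PY.map (projSub S)) := by
    rw [hc.1, hc.2]
  have hmL : (liftM S PY π').fst.prod (liftM S PY π').snd = PZ.prod PY := by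
    rw [hcoupL.1, hcoupL.2]
  rw [hm0, hmL]
  rw [mutInfo, dif_pos hs2, hm0, klDivNN] at hmi
  by_cases hcond : π' ≪ PZ.prod (PY.map (projSub S)) ∧
      Integrable (fun x => Real.log ((π'.rnDeriv (PZ.prod (PY.map (projSub S)))) x).toReal) π'
  swap
  · rw [if_neg hcond] at hmi; exact absurd rfl hmi
  obtain ⟨hac, hint⟩ := hcond
  set f := π'.rnDeriv (PZ.prod (PY.map (projSub S))) with hfdef
  have hfm : Measurable f := Measure.measurable_rnDeriv _ _
  have hπ' : (PZ.prod (PY.map (projSub S))).withDensity f = π' :=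
    Measure.withDensity_rnDeriv_eq _ _ hac
  have hL : liftM S PY π'
      = (PZ.prod PY).withDensity (fun p => f (p.1, projSub S p.2)) := by
    conv_lhs => rw [← hπ']
    rw [liftM_withDensity S PY _ (by rw [Measure.snd_prod]) hfm, liftM_prod S PY PZ]
  have hacL : liftM S PY π' ≪ PZ.prod PY := by
    rw [hL]; exact withDensity_absolutelyContinuous _ _
  have hfT : Measurable fun p : Evec d × Evec d => f (p.1, projSub S p.2) :=
    hfm.comp (measurable_projT' S)
  have hrd : (liftM S PY π').rnDeriv (PZ.prod PY)
      =ᵐ[PZ.prod PY] fun p => f (p.1, projSub S p.2) := by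
    rw [hL]; exact Measure.rnDeriv_withDensity _ hfT
  have hrdL : (liftM S PY π').rnDeriv (PZ.prod PY)
      =ᵐ[liftM S PY π'] fun p => f (p.1, projSub S p.2) := hacL.ae_le hrd
  have hmapback : (liftM S PY π').map
      (fun p : Evec d × Evec d => (p.1, projSub S p.2)) = π' :=
    map_projT'_liftM S PY π' hc.2
  have hlogm : Measurable fun x : Evec d × Evec d => Real.log (f x).toReal :=
    (hfm.ennreal_toReal).log
  have hintL0 : Integrable (fun p : Evec d × Evec d =>
      Real.log (f (p.1, projSub S p.2)).toReal) (liftM S PY π') := by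
    have h := (integrable_map_measure hlogm.aestronglyMeasurable
      (measurable_projT' S).aemeasurable).mp (by rwa [hmapback])
    exact h
  have hintL : Integrable
      (fun x => Real.log (((liftM S PY π').rnDeriv (PZ.prod PY)) x).toReal)
      (liftM S PY π') := by
    refine hintL0.congr ?_
    filter_upwards [hrdL] with p hp
    rw [hp]
  have hval : ∫ x, Real.log (((liftM S PY π').rnDeriv (PZ.prod PY)) x).toReal
        ∂(liftM S PY π')
      = ∫ x, Real.log (f x).toReal ∂π' := by
    have h1 : ∫ x, Real.log (((liftM S PY π').rnDeriv (PZ.prod PY)) x).toReal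
          ∂(liftM S PY π')
        = ∫ p, Real.log (f (p.1, projSub S p.2)).toReal ∂(liftM S PY π') :=
      integral_congr_ae (by filter_upwards [hrdL] with p hp; rw [hp])
    have h2 : ∫ x, Real.log (f x).toReal ∂π'
        = ∫ p, Real.log (f (p.1, projSub S p.2)).toReal ∂(liftM S PY π') := by
      conv_lhs => rw [← hmapback]
      exact integral_map (measurable_projT' S).aemeasurable hlogm.aestronglyMeasurable
    rw [h1, h2]
  rw [klDivNN, if_pos ⟨hacL, hintL⟩, klDivNN, if_pos ⟨hac, hint⟩, hval]

lemma cost_decomp {PZ PY : Measure (Evec d)}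
    [IsProbabilityMeasure PZ] [IsProbabilityMeasure PY]
    (hZS : ∀ᵐ z ∂PZ, z ∈ S) (hZ2 : Integrable (fun z => ‖z‖ ^ 2) PZ)
    (hY2 : Integrable (fun y => ‖y‖ ^ 2) PY)
    (π : Measure (Evec d × Evec d)) (hc : IsCoupling π PZ PY) :
    Integrable (fun p : Evec d × Evec d => ‖p.1 - p.2‖ ^ 2) π ∧
    Integrable (fun p : Evec d × Evec d => ‖p.1 - p.2‖ ^ 2)
      (π.map (fun p : Evec d × Evec d => (p.1, projSub S p.2))) ∧
    ∫ p, ‖p.1 - p.2‖ ^ 2 ∂π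
      = (∫ p, ‖p.1 - p.2‖ ^ 2
          ∂(π.map (fun p : Evec d × Evec d => (p.1, projSub S p.2))))
        + ∫ y, ‖y - projSub S y‖ ^ 2 ∂PY := by
  haveI : IsProbabilityMeasure π := isProb_of_coupling hc
  have hnormsq : Measurable fun y : Evec d => ‖y‖ ^ 2 :=
    (continuous_norm.pow 2).measurable
  have hg2 : Measurable fun y : Evec d => ‖y - projSub S y‖ ^ 2 :=
    (((continuous_id.sub (continuous_projSub S)).norm).pow 2).measurable
  have hc' : IsCoupling (π.map (fun p : Evec d × Evec d => (p.1, projSub S p.2)))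
      PZ (PY.map (projSub S)) := coupling_map_proj hc
  have hPYS2 : Integrable (fun y => ‖y‖ ^ 2) (PY.map (projSub S)) := by
    refine (integrable_map_measure hnormsq.aestronglyMeasurable
      (measurable_projSub S).aemeasurable).mpr ?_
    refine hY2.mono' (hnormsq.comp (measurable_projSub S)).aestronglyMeasurable ?_
    refine Filter.Eventually.of_forall fun y => ?_
    show ‖‖projSub S y‖ ^ 2‖ ≤ ‖y‖ ^ 2
    rw [Real.norm_eq_abs, abs_of_nonneg (by positivity)]
    exact sq_norm_projSub_le S y
  have hcost1 : Integrable (fun p : Evec d × Evec d => ‖p.1 - p.2‖ ^ 2) π :=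
    integrable_cost_of_marginals π (by rw [hc.1]; exact hZ2) (by rw [hc.2]; exact hY2)
  have hcost2 : Integrable (fun p : Evec d × Evec d => ‖p.1 - p.2‖ ^ 2)
      (π.map (fun p : Evec d × Evec d => (p.1, projSub S p.2))) :=
    integrable_cost_of_marginals _ (by rw [hc'.1]; exact hZ2)
      (by rw [hc'.2]; exact hPYS2)
  have hmemS : ∀ᵐ p ∂π, p.1 ∈ S := by
    have hSc : MeasurableSet (S : Set (Evec d)) :=
      S.closed_of_finiteDimensional.measurableSet
    have h2 : π.fst ((S : Set (Evec d))ᶜ) = 0 := by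
      rw [hc.1]; exact ae_iff.mp hZS
    rw [Measure.fst_apply hSc.compl] at h2
    rw [ae_iff]
    exact h2
  have hae : ∀ᵐ p ∂π, ‖p.1 - p.2‖ ^ 2
      = ‖p.1 - projSub S p.2‖ ^ 2 + ‖p.2 - projSub S p.2‖ ^ 2 := by
    filter_upwards [hmemS] with p hp
    exact cost_pythagoras p.2 hp
  have hint1 : Integrable (fun p : Evec d × Evec d => ‖p.1 - projSub S p.2‖ ^ 2) π := by
    have h := (integrable_map_measure measurable_cost.aestronglyMeasurable
      (measurable_projT' S).aemeasurable).mp hcost2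
    exact h
  have hint2 : Integrable (fun p : Evec d × Evec d => ‖p.2 - projSub S p.2‖ ^ 2) π := by
    refine integrable_comp_snd hg2 ?_
    rw [hc.2]
    refine hY2.mono' hg2.aestronglyMeasurable ?_
    refine Filter.Eventually.of_forall fun y => ?_
    rw [Real.norm_eq_abs, abs_of_nonneg (by positivity)]
    exact sq_norm_sub_projSub_le S y
  refine ⟨hcost1, hcost2, ?_⟩
  rw [integral_congr_ae hae, integral_add hint1 hint2]
  congr 1
  · exact (integral_map (measurable_projT' S).aemeasurable
      measurable_cost.aestronglyMeasurable).symm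
  · rw [← hc.2]
    exact (integral_map measurable_snd.aemeasurable hg2.aestronglyMeasurable).symm

end SinkhornAux
namespace SinkhornAux

open MeasureTheory ProbabilityTheory
open scoped ENNReal

lemma entW2_proj {d : ℕ} (S : Submodule ℝ (Evec d)) (PZ PY : Measure (Evec d))
    [IsProbabilityMeasure PZ] [IsProbabilityMeasure PY]
    (hZS : ∀ᵐ z ∂PZ, z ∈ S) (hZ2 : Integrable (fun z => ‖z‖ ^ 2) PZ)
    (hY2 : Integrable (fun y => ‖y‖ ^ 2) PY) (lam : ℝ) (hlam : 0 ≤ lam) :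
    entW2 lam PZ PY
      = entW2 lam PZ (PY.map (projSub S)) + ∫ y, ‖y - projSub S y‖ ^ 2 ∂PY := by
  haveI hPYSp : IsProbabilityMeasure (PY.map (projSub S)) :=
    Measure.isProbabilityMeasure_map (measurable_projSub S).aemeasurable
  have hnormsq : Measurable fun y : Evec d => ‖y‖ ^ 2 :=
    (continuous_norm.pow 2).measurable
  have hPYS2 : Integrable (fun y => ‖y‖ ^ 2) (PY.map (projSub S)) := by
    refine (integrable_map_measure hnormsq.aestronglyMeasurable
      (measurable_projSub S).aemeasurable).mpr ?_
    refine hY2.mono' (hnormsq.comp (measurable_projSub S)).aestronglyMeasurable ?_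
    refine Filter.Eventually.of_forall fun y => ?_
    show ‖‖projSub S y‖ ^ 2‖ ≤ ‖y‖ ^ 2
    rw [Real.norm_eq_abs, abs_of_nonneg (by positivity)]
    exact sq_norm_projSub_le S y
  set E := ∫ y, ‖y - projSub S y‖ ^ 2 ∂PY with hEdef
  set A := {c : ℝ | ∃ π : Measure (Evec d × Evec d), IsCoupling π PZ PY ∧
    mutInfo π ≠ ⊤ ∧ Integrable (fun p => ‖p.1 - p.2‖ ^ 2) π ∧
    c = ∫ p, ‖p.1 - p.2‖ ^ 2 ∂π + lam * (mutInfo π).toReal} with hAdef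
  set B := {c : ℝ | ∃ π : Measure (Evec d × Evec d),
    IsCoupling π PZ (PY.map (projSub S)) ∧
    mutInfo π ≠ ⊤ ∧ Integrable (fun p => ‖p.1 - p.2‖ ^ 2) π ∧
    c = ∫ p, ‖p.1 - p.2‖ ^ 2 ∂π + lam * (mutInfo π).toReal} with hBdef
  have hApos : ∀ c ∈ A, (0:ℝ) ≤ c := by
    rintro c ⟨π, hcoup, hmi, hcost, rfl⟩
    have h1 : 0 ≤ ∫ p, ‖p.1 - p.2‖ ^ 2 ∂π :=
      integral_nonneg fun p => by positivity
    have h2 : 0 ≤ lam * (mutInfo π).toReal := mul_nonneg hlam ENNReal.toReal_nonneg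
    linarith
  have hBpos : ∀ c ∈ B, (0:ℝ) ≤ c := by
    rintro c ⟨π, hcoup, hmi, hcost, rfl⟩
    have h1 : 0 ≤ ∫ p, ‖p.1 - p.2‖ ^ 2 ∂π :=
      integral_nonneg fun p => by positivity
    have h2 : 0 ≤ lam * (mutInfo π).toReal := mul_nonneg hlam ENNReal.toReal_nonneg
    linarith
  have hAbdd : BddBelow A := ⟨0, fun c hc => hApos c hc⟩
  have hBbdd : BddBelow B := ⟨0, fun c hc => hBpos c hc⟩
  have hAne : A.Nonempty := by
    refine ⟨_, PZ.prod PY, ⟨Measure.fst_prod, Measure.snd_prod⟩,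
      mutInfo_prod_ne_top PZ PY, ?_, rfl⟩
    exact integrable_cost_of_marginals _ (by rw [Measure.fst_prod]; exact hZ2)
      (by rw [Measure.snd_prod]; exact hY2)
  have hBne : B.Nonempty := by
    refine ⟨_, PZ.prod (PY.map (projSub S)), ⟨Measure.fst_prod, Measure.snd_prod⟩,
      mutInfo_prod_ne_top PZ (PY.map (projSub S)), ?_, rfl⟩
    exact integrable_cost_of_marginals _ (by rw [Measure.fst_prod]; exact hZ2)
      (by rw [Measure.snd_prod]; exact hPYS2)
  have hEA : entW2 lam PZ PY = sInf A := rfl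
  have hEB : entW2 lam PZ (PY.map (projSub S)) = sInf B := rfl
  rw [hEA, hEB]
  apply le_antisymm
  · have h1 : ∀ c ∈ B, sInf A ≤ c + E := by
      rintro c ⟨π', hcoup, hmi, hcost, rfl⟩
      obtain ⟨hmi_eq, hcoupL⟩ := mutInfo_liftM S π' hcoup hmi
      haveI : IsProbabilityMeasure π' := isProb_of_coupling hcoup
      haveI : IsProbabilityMeasure (liftM S PY π') := isProb_of_coupling hcoupL
      obtain ⟨hc1, hc2, hceq⟩ := cost_decomp S hZS hZ2 hY2 (liftM S PY π') hcoupL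
      have hmapback := map_projT'_liftM S PY π' hcoup.2
      rw [hmapback] at hceq
      refine csInf_le hAbdd ?_
      refine ⟨liftM S PY π', hcoupL, by rw [hmi_eq]; exact hmi, hc1, ?_⟩
      rw [hceq, hmi_eq]; ring
    have h2 : sInf A - E ≤ sInf B := le_csInf hBne fun c hc => by linarith [h1 c hc]
    linarith
  · refine le_csInf hAne ?_
    rintro c ⟨π, hcoup, hmi, hcost, rfl⟩
    haveI : IsProbabilityMeasure π := isProb_of_coupling hcoup
    have hc' : IsCoupling (π.map (fun p : Evec d × Evec d => (p.1, projSub S p.2)))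
        PZ (PY.map (projSub S)) := coupling_map_proj hcoup
    have hmile : mutInfo (π.map (fun p : Evec d × Evec d => (p.1, projSub S p.2)))
        ≤ mutInfo π := mutInfo_map_le S π hcoup
    obtain ⟨hc1, hc2, hceq⟩ := cost_decomp S hZS hZ2 hY2 π hcoup
    have hmem : (∫ p, ‖p.1 - p.2‖ ^ 2
          ∂(π.map (fun p : Evec d × Evec d => (p.1, projSub S p.2)))
        + lam * (mutInfo (π.map
            (fun p : Evec d × Evec d => (p.1, projSub S p.2)))).toReal) ∈ B :=
      ⟨_, hc', ne_top_of_le_ne_top hmi hmile, hc2, rfl⟩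
    have hle := csInf_le hBbdd hmem
    have htR : (mutInfo (π.map
          (fun p : Evec d × Evec d => (p.1, projSub S p.2)))).toReal
        ≤ (mutInfo π).toReal := ENNReal.toReal_mono hmi hmile
    have hmul : lam * (mutInfo (π.map
          (fun p : Evec d × Evec d => (p.1, projSub S p.2)))).toReal
        ≤ lam * (mutInfo π).toReal := mul_le_mul_of_nonneg_left htR hlam
    rw [hceq]
    linarith

end SinkhornAux
/-- **Projection decomposition of the Sinkhorn divergence.**
If `Z` is supported in a subspace `S`, then
`S_λ(P_Z, P_Y) = S_λ(P_Z, P_{Y_S}) + E[‖Y_{S⊥}‖²]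
  + (W²_{2,λ}(P_{Y_S}, P_{Y_S}) − W²_{2,λ}(P_Y, P_Y))/2`. -/
theorem sinkhorn_projection_decomposition
    (d : ℕ) (S : Submodule ℝ (Evec d))
    (PZ PY : Measure (Evec d)) [IsProbabilityMeasure PZ] [IsProbabilityMeasure PY]
    (hZS : ∀ᵐ z ∂PZ, z ∈ S)
    (hZ2 : Integrable (fun z => ‖z‖ ^ 2) PZ) (hY2 : Integrable (fun y => ‖y‖ ^ 2) PY)
    (lam : ℝ) (hlam : 0 < lam) :
    sinkhornDiv lam PZ PY =
      sinkhornDiv lam PZ (Measure.map (projSub S) PY) + (∫ y, ‖y - projSub S y‖ ^ 2 ∂PY) +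
        (entW2 lam (Measure.map (projSub S) PY) (Measure.map (projSub S) PY) -
          entW2 lam PY PY) / 2 := by
  have key := SinkhornAux.entW2_proj S PZ PY hZS hZ2 hY2 lam hlam.le
  simp only [sinkhornDiv]
  linarith

end
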